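/- Let α ∈ ℝ and let Φ : {(t,x) ∈ ℝ × ℝ³ : |x| < t} → ℝ be smooth and homogeneous of degree α, i.e. Φ(λt, λx) = λ^α Φ(t,x) for all λ > 0 and |x| < t, and suppose sup_{|x| < 1} |∂^I Φ(1, x)| < ∞ for every word I. Then for all words I (with letters in {0,1,2,3}) and J (with letters in {1,2,3}) there exists a constant C, depending only on Φ, I and J, such that |∂^I L^J Φ(t, x)| ≤ C t^{α − |I|} for all (t,x) with |x| < t. -/

import Mathlib

noncomputable section

/-- Spatial part: Euclidean 3-space. -/
abbrev E3 : Type := EuclideanSpace ℝ (Fin 3)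

/-- Spacetime points `(t, x) ∈ ℝ × ℝ³`. -/
abbrev Spt : Type := ℝ × E3

/-- Time derivative `∂_t`. -/
def dt (u : Spt → ℝ) : Spt → ℝ := fun p => fderiv ℝ u p (1, 0)

/-- Spatial derivative `∂_a`, `a = 1,2,3`. -/
def dx (a : Fin 3) (u : Spt → ℝ) : Spt → ℝ :=
  fun p => fderiv ℝ u p (0, EuclideanSpace.single a 1)

/-- `∂_α` for `α ∈ {0,1,2,3}`, with `∂_0 = ∂_t`. -/
def pd : Fin 4 → (Spt → ℝ) → Spt → ℝ := ![dt, dx 0, dx 1, dx 2]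

/-- Iterated derivatives `∂^I` for a word `I` in `{0,1,2,3}`. -/
def pdW : List (Fin 4) → (Spt → ℝ) → Spt → ℝ
  | [], u => u
  | α :: I, u => pd α (pdW I u)

/-- Lorentz boost `L_a = x^a ∂_t + t ∂_a`. -/
def lb (a : Fin 3) (u : Spt → ℝ) : Spt → ℝ :=
  fun p => p.2 a * dt u p + p.1 * dx a u p

/-- Iterated Lorentz boosts `L^J` for a word `J` in `{1,2,3}`. -/
def lbW : List (Fin 3) → (Spt → ℝ) → Spt → ℝ
  | [], u => u
  | a :: J, u => lb a (lbW J u)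

open Set Filter Topology

def cone : Set Spt := {p : Spt | ‖p.2‖ < p.1}
lemma cone_open : IsOpen cone := isOpen_lt (continuous_snd.norm) continuous_fst

def vec : Fin 4 → Spt :=
  ![(1,0), (0, EuclideanSpace.single 0 1), (0, EuclideanSpace.single 1 1),
    (0, EuclideanSpace.single 2 1)]

lemma pd_apply (α : Fin 4) (u : Spt → ℝ) (p : Spt) :
    pd α u p = fderiv ℝ u p (vec α) := by
  fin_cases α <;> rfl

lemma diffAt {u : Spt → ℝ} (hu : ContDiffOn ℝ (⊤:ℕ∞) u cone) {p : Spt} (hp : p ∈ cone) :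
    DifferentiableAt ℝ u p :=
  (hu.contDiffAt (cone_open.mem_nhds hp)).differentiableAt (by simp)

lemma pd_congr {u v : Spt → ℝ} (h : EqOn u v cone) (α : Fin 4) :
    EqOn (pd α u) (pd α v) cone := by
  intro p hp
  have he : u =ᶠ[𝓝 p] v := eventually_of_mem (cone_open.mem_nhds hp) h
  rw [pd_apply, pd_apply, he.fderiv_eq]

lemma pd_smooth (α : Fin 4) {u : Spt → ℝ} (hu : ContDiffOn ℝ (⊤:ℕ∞) u cone) :
    ContDiffOn ℝ (⊤:ℕ∞) (pd α u) cone := by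
  have h := (((contDiffOn_infty_iff_fderiv_of_isOpen cone_open).1 hu).2).clm_apply
    (contDiffOn_const (c := vec α))
  exact h.congr (fun p _ => (pd_apply α u p))

lemma pdW_smooth (I : List (Fin 4)) {u : Spt → ℝ} (hu : ContDiffOn ℝ (⊤:ℕ∞) u cone) :
    ContDiffOn ℝ (⊤:ℕ∞) (pdW I u) cone := by
  induction I with
  | nil => exact hu
  | cons α I ih => exact pd_smooth α ih

lemma pdW_congr {u v : Spt → ℝ} (h : EqOn u v cone) (I : List (Fin 4)) :
    EqOn (pdW I u) (pdW I v) cone := by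
  induction I with
  | nil => exact h
  | cons α I ih => exact pd_congr ih α

lemma pd_add (α : Fin 4) {u v : Spt → ℝ} (hu : ContDiffOn ℝ (⊤:ℕ∞) u cone)
    (hv : ContDiffOn ℝ (⊤:ℕ∞) v cone) {p : Spt} (hp : p ∈ cone) :
    pd α (fun q => u q + v q) p = pd α u p + pd α v p := by
  rw [pd_apply, pd_apply, pd_apply, fderiv_fun_add (diffAt hu hp) (diffAt hv hp)]
  rfl

lemma pd_const_mul (α : Fin 4) (c : ℝ) {u : Spt → ℝ} (hu : ContDiffOn ℝ (⊤:ℕ∞) u cone)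
    {p : Spt} (hp : p ∈ cone) :
    pd α (fun q => c * u q) p = c * pd α u p := by
  rw [pd_apply, pd_apply, fderiv_const_mul (diffAt hu hp) c]
  rfl

lemma pd_clm_mul (α : Fin 4) (L : Spt →L[ℝ] ℝ) {u : Spt → ℝ}
    (hu : ContDiffOn ℝ (⊤:ℕ∞) u cone) {p : Spt} (hp : p ∈ cone) :
    pd α (fun q => L q * u q) p = L (vec α) * u p + L p * pd α u p := by
  rw [pd_apply, pd_apply,
    fderiv_fun_mul (L.differentiableAt) (diffAt hu hp)]
  simp [L.fderiv]
  ring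

inductive DSpan (u : Spt → ℝ) : (Spt → ℝ) → Prop
  | zero : DSpan u (fun _ => 0)
  | add (c : ℝ) (K : List (Fin 4)) {g : Spt → ℝ} (hg : DSpan u g) :
      DSpan u (fun p => c * pdW K u p + g p)

lemma DSpan_smooth {u g : Spt → ℝ} (hu : ContDiffOn ℝ (⊤:ℕ∞) u cone)
    (hg : DSpan u g) : ContDiffOn ℝ (⊤:ℕ∞) g cone := by
  induction hg with
  | zero => exact contDiffOn_const
  | add c K hg ih => exact (contDiffOn_const.mul (pdW_smooth _ hu)).add ih

lemma DSpan_bound {u g : Spt → ℝ}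
    (hb : ∀ I : List (Fin 4), ∃ M : ℝ, ∀ x : E3, ‖x‖ < 1 → |pdW I u (1, x)| ≤ M)
    (hg : DSpan u g) : ∃ M : ℝ, ∀ x : E3, ‖x‖ < 1 → |g (1, x)| ≤ M := by
  induction hg with
  | zero => exact ⟨0, fun x _ => by simp⟩
  | add c K hg ih =>
    obtain ⟨M1, hM1⟩ := hb K
    obtain ⟨M2, hM2⟩ := ih
    refine ⟨|c| * M1 + M2, fun x hx => ?_⟩
    refine (abs_add_le _ _).trans ?_
    rw [abs_mul]
    exact add_le_add (mul_le_mul_of_nonneg_left (hM1 x hx) (abs_nonneg c)) (hM2 x hx)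

lemma DSpan_pd {u g : Spt → ℝ} (hu : ContDiffOn ℝ (⊤:ℕ∞) u cone)
    (hg : DSpan u g) (α : Fin 4) :
    ∃ g' : Spt → ℝ, DSpan u g' ∧ ∀ p ∈ cone, pd α g p = g' p := by
  induction hg with
  | zero =>
    refine ⟨fun _ => 0, DSpan.zero, fun p hp => ?_⟩
    rw [pd_apply]; simp [fderiv_const]
  | add c K hg ih =>
    obtain ⟨g', hg', heq⟩ := ih
    refine ⟨fun p => c * pdW (α :: K) u p + g' p, DSpan.add c (α :: K) hg', fun p hp => ?_⟩
    rw [pd_add α (contDiffOn_const.mul (pdW_smooth K hu)) (DSpan_smooth hu hg) hp,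
      pd_const_mul α c (pdW_smooth K hu) hp, heq p hp]
    rfl

def Bn (u : Spt → ℝ) : Prop :=
  ContDiffOn ℝ (⊤:ℕ∞) u cone ∧
    ∀ I : List (Fin 4), ∃ M : ℝ, ∀ x : E3, ‖x‖ < 1 → |pdW I u (1, x)| ≤ M

lemma slice_mem {x : E3} (hx : ‖x‖ < 1) : ((1 : ℝ), x) ∈ cone := hx

lemma coef_rep {u : Spt → ℝ} (L : Spt →L[ℝ] ℝ) (hu : ContDiffOn ℝ (⊤:ℕ∞) u cone)
    (I : List (Fin 4)) :
    ∃ g : Spt → ℝ, DSpan u g ∧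
      ∀ p ∈ cone, pdW I (fun q => L q * u q) p = L p * pdW I u p + g p := by
  induction I with
  | nil => exact ⟨fun _ => 0, DSpan.zero, fun p _ => by simp [pdW]⟩
  | cons α I ih =>
    obtain ⟨g, hg, heq⟩ := ih
    obtain ⟨g', hg', heq'⟩ := DSpan_pd hu hg α
    refine ⟨fun p => L (vec α) * pdW I u p + g' p,
      DSpan.add (L (vec α)) I hg', fun p hp => ?_⟩
    have h1 : pdW (α :: I) (fun q => L q * u q) p
        = pd α (fun q => L q * pdW I u q + g q) p := by
      exact pd_congr (fun q hq => heq q hq) α hp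
    rw [h1, pd_add α (((L.contDiff (n := (⊤:ℕ∞))).contDiffOn).mul (pdW_smooth I hu))
        (DSpan_smooth hu hg) hp,
      pd_clm_mul α L (pdW_smooth I hu) hp, heq' p hp]
    show L (vec α) * pdW I u p + L p * pdW (α :: I) u p + g' p = _
    ring

lemma Bn_clm_mul {u : Spt → ℝ} (L : Spt →L[ℝ] ℝ)
    (hL : ∀ x : E3, ‖x‖ < 1 → |L (1, x)| ≤ 1) (hB : Bn u) :
    Bn (fun p => L p * u p) := by
  obtain ⟨hu, hb⟩ := hB
  refine ⟨((L.contDiff (n := (⊤:ℕ∞))).contDiffOn).mul hu, fun I => ?_⟩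
  obtain ⟨g, hg, heq⟩ := coef_rep L hu I
  obtain ⟨M1, hM1⟩ := hb I
  obtain ⟨M2, hM2⟩ := DSpan_bound hb hg
  refine ⟨1 * M1 + M2, fun x hx => ?_⟩
  rw [heq (1, x) (slice_mem hx)]
  refine (abs_add_le _ _).trans (add_le_add ?_ (hM2 x hx))
  rw [abs_mul]
  exact mul_le_mul (hL x hx) (hM1 x hx) (abs_nonneg _) zero_le_one

lemma pdW_append (I : List (Fin 4)) (α : Fin 4) (u : Spt → ℝ) :
    pdW (I ++ [α]) u = pdW I (pd α u) := by
  induction I with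
  | nil => rfl
  | cons β I ih => show pd β (pdW (I ++ [α]) u) = _; rw [ih]; rfl

lemma pdW_add (I : List (Fin 4)) {u v : Spt → ℝ} (hu : ContDiffOn ℝ (⊤:ℕ∞) u cone)
    (hv : ContDiffOn ℝ (⊤:ℕ∞) v cone) :
    ∀ p ∈ cone, pdW I (fun q => u q + v q) p = pdW I u p + pdW I v p := by
  induction I with
  | nil => intro p _; rfl
  | cons α I ih =>
    intro p hp
    have h1 : pdW (α :: I) (fun q => u q + v q) p
        = pd α (fun q => pdW I u q + pdW I v q) p :=
      pd_congr (fun q hq => ih q hq) α hp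
    rw [h1, pd_add α (pdW_smooth I hu) (pdW_smooth I hv) hp]
    rfl

lemma Bn_add {u v : Spt → ℝ} (hu : Bn u) (hv : Bn v) : Bn (fun p => u p + v p) := by
  refine ⟨hu.1.add hv.1, fun I => ?_⟩
  obtain ⟨M1, hM1⟩ := hu.2 I
  obtain ⟨M2, hM2⟩ := hv.2 I
  refine ⟨M1 + M2, fun x hx => ?_⟩
  rw [pdW_add I hu.1 hv.1 (1, x) (slice_mem hx)]
  exact (abs_add_le _ _).trans (add_le_add (hM1 x hx) (hM2 x hx))

lemma Bn_pd (α : Fin 4) {u : Spt → ℝ} (hu : Bn u) : Bn (pd α u) := by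
  refine ⟨pd_smooth α hu.1, fun I => ?_⟩
  obtain ⟨M, hM⟩ := hu.2 (I ++ [α])
  exact ⟨M, fun x hx => by rw [← pdW_append]; exact hM x hx⟩

def Tc : Spt →L[ℝ] ℝ := ContinuousLinearMap.fst ℝ ℝ E3
def Xc (b : Fin 3) : Spt →L[ℝ] ℝ :=
  (EuclideanSpace.proj b).comp (ContinuousLinearMap.snd ℝ ℝ E3)

lemma abs_coord (b : Fin 3) (x : E3) : |x b| ≤ ‖x‖ := by
  have h := abs_real_inner_le_norm (EuclideanSpace.single b (1:ℝ)) x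
  rw [EuclideanSpace.inner_single_left, EuclideanSpace.norm_single] at h
  simpa using h

lemma pd_zero_eq (u : Spt → ℝ) : pd 0 u = dt u := rfl
lemma pd_succ_eq (a : Fin 3) (u : Spt → ℝ) : pd a.succ u = dx a u := by
  fin_cases a <;> rfl

lemma Bn_lb (a : Fin 3) {u : Spt → ℝ} (hu : Bn u) : Bn (lb a u) := by
  have h1 : Bn (fun p => Xc a p * pd 0 u p) := by
    refine Bn_clm_mul (Xc a) (fun x hx => ?_) (Bn_pd 0 hu)
    exact (abs_coord a x).trans hx.le
  have h2 : Bn (fun p => Tc p * pd a.succ u p) := by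
    refine Bn_clm_mul Tc (fun x hx => ?_) (Bn_pd a.succ hu)
    simp [Tc]
  have := Bn_add h1 h2
  have he : (fun p => Xc a p * pd 0 u p + Tc p * pd a.succ u p) = lb a u := by
    funext p
    simp [Xc, Tc, lb, pd_zero_eq, pd_succ_eq, EuclideanSpace.proj]
  rwa [he] at this

def Hom (β : ℝ) (u : Spt → ℝ) : Prop :=
  ∀ l : ℝ, 0 < l → ∀ p ∈ cone, u (l • p) = l ^ β * u p

lemma smul_mem_cone {l : ℝ} (hl : 0 < l) {p : Spt} (hp : p ∈ cone) : l • p ∈ cone := by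
  have : ‖l • p.2‖ = l * ‖p.2‖ := by
    rw [norm_smul, Real.norm_eq_abs, abs_of_pos hl]
  show ‖(l • p).2‖ < (l • p).1
  have h2 : (l • p).2 = l • p.2 := rfl
  have h1 : (l • p).1 = l * p.1 := rfl
  rw [h1, h2, this]
  exact mul_lt_mul_of_pos_left hp hl

lemma Hom_pd {β : ℝ} {u : Spt → ℝ} (hu : ContDiffOn ℝ (⊤:ℕ∞) u cone)
    (h : Hom β u) (α : Fin 4) : Hom (β - 1) (pd α u) := by
  intro l hl p hp
  have hne : l ≠ 0 := hl.ne'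
  have hE : (fun q : Spt => u (l • q)) =ᶠ[𝓝 p] (fun q => l ^ β * u q) :=
    eventually_of_mem (cone_open.mem_nhds hp) (fun q hq => h l hl q hq)
  have hdiff : DifferentiableAt ℝ u (l • p) := diffAt hu (smul_mem_cone hl hp)
  have hg : DifferentiableAt ℝ (fun q : Spt => l • q) p :=
    differentiableAt_id.const_smul l
  have hder : fderiv ℝ (fun q : Spt => u (l • q)) p
      = (fderiv ℝ u (l • p)).comp (fderiv ℝ (fun q : Spt => l • q) p) :=
    fderiv_comp p hdiff hg
  have hgder : fderiv ℝ (fun q : Spt => l • q) p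
      = l • ContinuousLinearMap.id ℝ Spt := by
    rw [fderiv_fun_const_smul differentiableAt_fun_id l, fderiv_fun_id]
  have hre : fderiv ℝ (fun q : Spt => l ^ β * u q) p = l ^ β • fderiv ℝ u p :=
    fderiv_const_mul (diffAt hu hp) _
  have key : l * fderiv ℝ u (l • p) (vec α) = l ^ β * fderiv ℝ u p (vec α) := by
    have := congrArg (fun (T : Spt →L[ℝ] ℝ) => T (vec α)) (hE.fderiv_eq.trans hre)
    rw [hder, hgder] at this
    simpa [smul_eq_mul, mul_comm] using this
  rw [pd_apply, pd_apply]
  have hsub : l ^ (β - 1) = l ^ β / l := by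
    rw [Real.rpow_sub hl, Real.rpow_one]
  rw [hsub]
  field_simp
  linarith [key]

lemma Hom_lb {β : ℝ} {u : Spt → ℝ} (hu : ContDiffOn ℝ (⊤:ℕ∞) u cone)
    (h : Hom β u) (a : Fin 3) : Hom β (lb a u) := by
  intro l hl p hp
  have h0 : dt u (l • p) = l ^ (β - 1) * dt u p := by
    have := Hom_pd hu h 0 l hl p hp
    rwa [pd_zero_eq] at this
  have ha : dx a u (l • p) = l ^ (β - 1) * dx a u p := by
    have := Hom_pd hu h a.succ l hl p hp
    rwa [pd_succ_eq] at this
  have h1 : (l • p).1 = l * p.1 := rfl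
  have h2 : (l • p).2 a = l * p.2 a := rfl
  show (l • p).2 a * dt u (l • p) + (l • p).1 * dx a u (l • p) = _
  rw [h1, h2, h0, ha]
  have hll : l * l ^ (β - 1) = l ^ β := by
    rw [Real.rpow_sub hl, Real.rpow_one]
    field_simp
  show l * p.2 a * (l ^ (β-1) * dt u p) + l * p.1 * (l ^ (β-1) * dx a u p)
      = l ^ β * (p.2 a * dt u p + p.1 * dx a u p)
  rw [← hll]; ring

lemma Hom_pdW {β : ℝ} {u : Spt → ℝ} (hu : ContDiffOn ℝ (⊤:ℕ∞) u cone)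
    (h : Hom β u) (I : List (Fin 4)) : Hom (β - I.length) (pdW I u) := by
  induction I with
  | nil => simpa [pdW] using h
  | cons α I ih =>
    have := Hom_pd (pdW_smooth I hu) ih α
    have hc : β - ((α :: I).length : ℝ) = β - (I.length : ℝ) - 1 := by
      push_cast [List.length_cons]; ring
    rwa [hc]


/-- Decay of derivatives of a smooth homogeneous function of degree `α` on `{|x| < t}`:
`|∂^I L^J Φ(t,x)| ≤ C t^{α − |I|}`. -/
theorem homogeneous_function_derivative_decay
    (α : ℝ) (Φ : Spt → ℝ)
    (hΦ : ContDiffOn ℝ (⊤ : ℕ∞) Φ {p : Spt | ‖p.2‖ < p.1})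
    (hhom : ∀ l : ℝ, 0 < l → ∀ p : Spt, ‖p.2‖ < p.1 →
      Φ (l * p.1, l • p.2) = l ^ α * Φ p)
    (hbd : ∀ I : List (Fin 4), ∃ M : ℝ, ∀ x : E3, ‖x‖ < 1 → |pdW I Φ (1, x)| ≤ M) :
    ∀ (I : List (Fin 4)) (J : List (Fin 3)), ∃ C : ℝ,
      ∀ p : Spt, ‖p.2‖ < p.1 →
        |pdW I (lbW J Φ) p| ≤ C * p.1 ^ (α - (I.length : ℝ)) := by
  intro I J
  have hBΦ : Bn Φ := ⟨hΦ, hbd⟩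
  have hHΦ : Hom α Φ := by
    intro l hl p hp
    have : l • p = (l * p.1, l • p.2) := rfl
    rw [this]
    exact hhom l hl p hp
  have hJ : Bn (lbW J Φ) ∧ Hom α (lbW J Φ) := by
    induction J with
    | nil => exact ⟨hBΦ, hHΦ⟩
    | cons a J ih => exact ⟨Bn_lb a ih.1, Hom_lb ih.1.1 ih.2 a⟩
  obtain ⟨M, hM⟩ := hJ.1.2 I
  have hH : Hom (α - I.length) (pdW I (lbW J Φ)) := Hom_pdW hJ.1.1 hJ.2 I
  refine ⟨M, fun p hp => ?_⟩
  have ht : 0 < p.1 := lt_of_le_of_lt (norm_nonneg _) hp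
  set q : Spt := (1, p.1⁻¹ • p.2) with hqdef
  have hxq : ‖p.1⁻¹ • p.2‖ < 1 := by
    rw [norm_smul, Real.norm_eq_abs, abs_of_pos (inv_pos.2 ht), inv_mul_eq_div,
      div_lt_one ht]
    exact hp
  have hq : q ∈ cone := hxq
  have hpq : p.1 • q = p := by
    have : p.1 • q = (p.1 * 1, p.1 • (p.1⁻¹ • p.2)) := rfl
    rw [this, smul_smul, mul_inv_cancel₀ ht.ne', one_smul, mul_one]
  have hhh := hH p.1 ht q hq
  rw [hpq] at hhh
  rw [hhh, abs_mul, abs_of_pos (Real.rpow_pos_of_pos ht _), mul_comm]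
  exact mul_le_mul_of_nonneg_right (hM _ hxq) (Real.rpow_pos_of_pos ht _).le
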